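/- Let k be a field of characteristic p > 0 and G a finite p-group acting on a commutative k-algebra A by algebra automorphisms. If A is trace-surjective (tr(A) = A^G), then for every prime ideal P of A the inertia group T_P = {g ∈ Stab_G(P) : g acts trivially on A/P} is trivial. -/

import Mathlib

/-- If `A` is a trace-surjective commutative `G`-algebra (`G` a finite
`p`-group, `char k = p`), then for every prime ideal `P` of `A` the inertia group is
trivial: any `g ∈ G` acting trivially on `A/P` (i.e. with `g • a - a ∈ P` for all `a`,
which in particular forces `g` to stabilize `P`) must be the identity. -/
theorem inertia_group_trivial
    {p : ℕ} [Fact p.Prime] (k : Type*) [Field k] [CharP k p]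
    (G : Type*) [Group G] [Fintype G] (hG : IsPGroup p G)
    (A : Type*) [CommRing A] [Algebra k A] [MulSemiringAction G A] [SMulCommClass G k A]
    (hts : ∀ b : A, (∀ g : G, g • b = b) → ∃ x : A, (∑ g : G, g • x) = b)
    (P : Ideal A) (hP : P.IsPrime)
    (g : G) (hg : ∀ a : A, g • a - a ∈ P) :
    g = 1 := by
  classical
  by_contra hne
  haveI := hP
  -- all powers of g act trivially mod P
  have hpow : ∀ (n : ℕ) (a : A), g ^ n • a - a ∈ P := by
    intro n
    induction n with
    | zero => intro a; simp
    | succ n ih =>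
      intro a
      have h1 := ih (g • a)
      have h2 := hg a
      have := P.add_mem h1 h2
      simpa [pow_succ, mul_smul, sub_add_sub_cancel] using this
  set H : Subgroup G := Subgroup.zpowers g with hH
  have hHmem : ∀ h : G, h ∈ H → ∀ a : A, h • a - a ∈ P := by
    intro h hh a
    obtain ⟨n, rfl⟩ := mem_powers_iff_mem_zpowers.mpr hh
    exact hpow n a
  -- p divides the order of H
  have hcard : p ∣ Fintype.card H := by
    obtain ⟨n, hn⟩ := IsPGroup.iff_orderOf.mp hG g
    rw [Fintype.card_zpowers, hn]
    have hn0 : n ≠ 0 := by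
      rintro rfl
      rw [pow_zero, orderOf_eq_one_iff] at hn
      exact hne hn
    exact dvd_pow_self p hn0
  -- trace surjectivity applied to 1
  obtain ⟨x, hx⟩ := hts 1 (fun γ => smul_one γ)
  -- pass to the quotient ring
  let f : A →+* A ⧸ P := Ideal.Quotient.mk P
  have hp0 : (p : A ⧸ P) = 0 := by
    have : (p : A) = 0 := by
      rw [← map_natCast (algebraMap k A) p, CharP.cast_eq_zero k p, map_zero]
    rw [← map_natCast f p, this, map_zero]
  -- the function γ ↦ f (γ⁻¹ • x) is constant on left cosets of H
  have hconst : ∀ γ γ' : G, (γ : G ⧸ H) = (γ' : G ⧸ H) → f (γ⁻¹ • x) = f (γ'⁻¹ • x) := by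
    intro γ γ' h
    have hmem : γ⁻¹ * γ' ∈ H := QuotientGroup.eq.mp h
    have : γ'⁻¹ • x = (γ⁻¹ * γ')⁻¹ • (γ⁻¹ • x) := by
      rw [← mul_smul]; group
    rw [this, eq_comm, Ideal.Quotient.mk_eq_mk_iff_sub_mem]
    exact hHmem _ (H.inv_mem hmem) _
  -- the main computation: 1 = 0 in A ⧸ P
  have hmain : (1 : A ⧸ P) = 0 := by
    have h1 : (1 : A ⧸ P) = ∑ γ : G, f (γ • x) := by
      rw [← map_one f, ← hx, map_sum]
    have h2 : ∑ γ : G, f (γ • x) = ∑ γ : G, f (γ⁻¹ • x) :=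
      (Fintype.sum_equiv (Equiv.inv G) _ _ (fun γ => by simp)).symm
    have h3 : ∑ γ : G, f (γ⁻¹ • x) =
        ∑ q : G ⧸ H, ∑ γ ∈ Finset.univ.filter (fun γ : G => (γ : G ⧸ H) = q),
          f (γ⁻¹ • x) :=
      (Finset.sum_fiberwise Finset.univ (fun γ : G => (γ : G ⧸ H)) _).symm
    rw [h1, h2, h3]
    apply Finset.sum_eq_zero
    intro q _
    have hval : ∀ γ ∈ Finset.univ.filter (fun γ : G => (γ : G ⧸ H) = q),
        f (γ⁻¹ • x) = f ((q.out)⁻¹ • x) := by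
      intro γ hγ
      have : (γ : G ⧸ H) = q := (Finset.mem_filter.mp hγ).2
      exact hconst γ q.out (by rw [this, QuotientGroup.out_eq'])
    rw [Finset.sum_congr rfl hval, Finset.sum_const]
    have hcardfib : (Finset.univ.filter (fun γ : G => (γ : G ⧸ H) = q)).card
        = Fintype.card H := by
      apply Finset.card_bij (fun γ hγ => (⟨(q.out)⁻¹ * γ, by
        have h2 : (γ : G ⧸ H) = q := (Finset.mem_filter.mp hγ).2
        exact QuotientGroup.eq.mp (by rw [h2, QuotientGroup.out_eq'])⟩ : H))
      · intro γ hγ; exact Finset.mem_univ _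
      · intro γ hγ γ' hγ' h
        have := congrArg Subtype.val h
        simpa using this
      · intro h hh
        refine ⟨q.out * h.1, ?_, by simp⟩
        simp only [Finset.mem_filter, Finset.mem_univ, true_and]
        rw [← QuotientGroup.out_eq' q, QuotientGroup.eq]
        simpa using H.inv_mem h.2
    rw [hcardfib]
    obtain ⟨m, hm⟩ := hcard
    rw [hm, mul_comm, mul_nsmul, nsmul_eq_mul]
    simp [hp0]
  exact one_ne_zero hmain
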